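/- Let S be a set, let Γ be the free group on S, and let ℤ[Γ] denote the integral group ring of Γ. Define the additive map ν : ⊕_{s∈S} ℤ[Γ] → ℤ[Γ] (direct sum of copies of ℤ[Γ] indexed by S, i.e. finitely supported families) by ν((x_s)_{s∈S}) = Σ_{s∈S} (x_s − s·x_s), where s·x_s denotes left multiplication of x_s by the group element s. Then ν is injective. -/

import Mathlib

open MonoidAlgebra Finsupp MulOpposite

section aux
variable (S : Type*)

local notation "R" => MonoidAlgebra ℤ (FreeGroup S)
local notation "M" => (S →₀ MonoidAlgebra ℤ (FreeGroup S))

/-- Pairs (γ, d) with multiplication (α,d)(β,e) = (αβ, d·β + e). -/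
def FoxG : Type _ := FreeGroup S × (S →₀ MonoidAlgebra ℤ (FreeGroup S))

variable {S}

noncomputable instance : Group (FoxG S) where
  mul a b := (a.1 * b.1, (op (of ℤ (FreeGroup S) b.1) : Rᵐᵒᵖ) • a.2 + b.2)
  one := (1, 0)
  inv a := (a.1⁻¹, -((op (of ℤ (FreeGroup S) a.1⁻¹) : Rᵐᵒᵖ) • a.2))
  mul_assoc a b c := by
    show Prod.mk _ _ = Prod.mk _ _
    refine Prod.ext (mul_assoc _ _ _) ?_
    show (op (of ℤ (FreeGroup S) c.1) : Rᵐᵒᵖ) • ((op (of ℤ (FreeGroup S) b.1) : Rᵐᵒᵖ) • a.2 + b.2) + c.2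
       = (op (of ℤ (FreeGroup S) (b.1 * c.1)) : Rᵐᵒᵖ) • a.2 + ((op (of ℤ (FreeGroup S) c.1) : Rᵐᵒᵖ) • b.2 + c.2)
    rw [smul_add, map_mul, op_mul, mul_smul, add_assoc]
  one_mul a := by
    show Prod.mk _ _ = _
    refine Prod.ext (one_mul _) ?_
    show (op (of ℤ (FreeGroup S) a.1) : Rᵐᵒᵖ) • (0 : M) + a.2 = a.2
    rw [smul_zero, zero_add]
  mul_one a := by
    show Prod.mk _ _ = _
    refine Prod.ext (mul_one _) ?_
    show (op (of ℤ (FreeGroup S) (1 : FreeGroup S)) : Rᵐᵒᵖ) • a.2 + 0 = a.2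
    rw [map_one, op_one, one_smul, add_zero]
  inv_mul_cancel a := by
    show Prod.mk _ _ = Prod.mk _ _
    refine Prod.ext (inv_mul_cancel _) ?_
    show (op (of ℤ (FreeGroup S) a.1) : Rᵐᵒᵖ) • (-((op (of ℤ (FreeGroup S) a.1⁻¹) : Rᵐᵒᵖ) • a.2)) + a.2 = 0
    rw [smul_neg, ← mul_smul, ← op_mul, ← map_mul, inv_mul_cancel, map_one, op_one, one_smul,
      neg_add_cancel]

/-- The crossed homomorphism packaged as a group hom. -/
noncomputable def foxHom : FreeGroup S →* FoxG S :=
  FreeGroup.lift fun s => (FreeGroup.of s, -Finsupp.single s (1 : R))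

noncomputable def foxFst : FoxG S →* FreeGroup S where
  toFun := Prod.fst
  map_one' := rfl
  map_mul' _ _ := rfl

lemma foxHom_fst (γ : FreeGroup S) : (foxHom γ).1 = γ := by
  have : (foxFst).comp foxHom = MonoidHom.id (FreeGroup S) := by
    apply FreeGroup.ext_hom
    intro s
    simp [foxHom, foxFst, FreeGroup.lift_apply_of]
    exact congrArg Prod.fst (FreeGroup.lift_apply_of (β := FoxG S) (f := fun s => (FreeGroup.of s, -Finsupp.single s (1 : R))))
  exact congrFun (congrArg (fun f => f.toFun) this) γ

noncomputable def foxD (γ : FreeGroup S) : M := (foxHom γ).2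

lemma foxD_of_mul (s : S) (γ : FreeGroup S) :
    foxD (FreeGroup.of s * γ) = -Finsupp.single s (of ℤ (FreeGroup S) γ) + foxD γ := by
  have h : foxHom (FreeGroup.of s * γ) = foxHom (FreeGroup.of s) * foxHom γ := map_mul _ _ _
  have h2 : foxHom (FreeGroup.of s) = (FreeGroup.of s, -Finsupp.single s (1 : R)) := by
    simp [foxHom, FreeGroup.lift_apply_of]
    exact FreeGroup.lift_apply_of (β := FoxG S)
  unfold foxD
  rw [h, h2]
  show (op (of ℤ (FreeGroup S) (foxHom γ).1) : Rᵐᵒᵖ) • (-Finsupp.single s (1 : R)) + (foxHom γ).2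
      = _
  rw [foxHom_fst, smul_neg, Finsupp.smul_single, MulOpposite.smul_eq_mul_unop, unop_op, one_mul]

/-- The retraction `r : ℤ[Γ] →ₗ[ℤ] M`. -/
noncomputable def foxR : MonoidAlgebra ℤ (FreeGroup S) →ₗ[ℤ] M :=
  Finsupp.lift M ℤ (FreeGroup S) foxD ∘ₗ (MonoidAlgebra.coeffLinearEquiv ℤ).toLinearMap

lemma foxR_of (γ : FreeGroup S) : foxR (of ℤ (FreeGroup S) γ) = foxD γ := by
  unfold foxR
  rw [LinearMap.comp_apply]
  show Finsupp.lift M ℤ (FreeGroup S) foxD (Finsupp.single γ 1) = _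
  erw [Finsupp.lift_apply]
  rw [Finsupp.sum_single_index (zero_smul ℤ (foxD γ)), one_smul]

lemma foxR_key (s : S) (a : R) :
    foxR (a - of ℤ (FreeGroup S) (FreeGroup.of s) * a) = Finsupp.single s a := by
  induction a using MonoidAlgebra.induction_on with
  | of γ =>
    rw [← map_mul, foxR.map_sub, foxR_of, foxR_of, foxD_of_mul]
    abel
  | add f g hf hg =>
    rw [mul_add, add_sub_add_comm, map_add, hf, hg, Finsupp.single_add]
  | smul z f hf =>
    rw [mul_smul_comm, ← smul_sub, map_smul, hf, Finsupp.smul_single]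

end aux

theorem freeGroup_nu_injective (S : Type*) :
    Function.Injective
      (fun x : S →₀ MonoidAlgebra ℤ (FreeGroup S) =>
        x.sum fun s a =>
          a - MonoidAlgebra.of ℤ (FreeGroup S) (FreeGroup.of s) * a) := by
  have key : ∀ x : S →₀ MonoidAlgebra ℤ (FreeGroup S),
      foxR (x.sum fun s a => a - MonoidAlgebra.of ℤ (FreeGroup S) (FreeGroup.of s) * a) = x := by
    intro x
    induction x using Finsupp.induction with
    | zero => simp
    | single_add s a x hs ha ih =>
      rw [Finsupp.sum_add_index' (by simp) (fun s a b => by rw [mul_add]; abel),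
        map_add, ih, Finsupp.sum_single_index (by simp), foxR_key, add_comm]
  intro x y h
  rw [← key x, ← key y]
  exact congrArg _ h
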